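/- arXiv:1004.0561 — 2 statements merged into one kernel-verified Lean document; each statement's English description precedes it below -/
import Mathlib

section
/- Every eigenvalue of any finite product of matrices from the family {G₁,...,G₁₂} has absolute value at most 1; in particular, the spectral radius of any such product equals 0 or 1, and the joint spectral radius of the family is at most 1. -/
def G : Fin 12 → Matrix (Fin 3) (Fin 3) ℂ :=
  ![!![0,0,-1; 0,1,0; 0,0,1],
    !![1,0,0; 1,1,1; -1,0,0],
    !![0,0,0; 0,1,0; 0,0,1],
    !![0,0,0; 0,1,0; 1,0,1],
    !![1,0,0; 0,1,1; 0,0,0],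
    !![1,0,1; 0,1,0; 0,0,0],
    !![0,-1,-1; 0,1,0; 0,0,1],
    !![1,0,0; -1,0,-1; 0,0,1],
    !![1,0,0; 0,0,0; 0,1,1],
    !![1,0,0; 0,0,0; 0,0,1],
    !![1,1,1; 0,1,0; 0,-1,0],
    !![1,0,0; 0,0,-1; 0,0,1]]

def Gz : Fin 12 → Matrix (Fin 3) (Fin 3) ℤ :=
  ![!![0,0,-1; 0,1,0; 0,0,1],
    !![1,0,0; 1,1,1; -1,0,0],
    !![0,0,0; 0,1,0; 0,0,1],
    !![0,0,0; 0,1,0; 1,0,1],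
    !![1,0,0; 0,1,1; 0,0,0],
    !![1,0,1; 0,1,0; 0,0,0],
    !![0,-1,-1; 0,1,0; 0,0,1],
    !![1,0,0; -1,0,-1; 0,0,1],
    !![1,0,0; 0,0,0; 0,1,1],
    !![1,0,0; 0,0,0; 0,0,1],
    !![1,1,1; 0,1,0; 0,-1,0],
    !![1,0,0; 0,0,-1; 0,0,1]]

def V0 : List (Fin 3 → ℤ) :=
  [![-1,-1,1], ![-1,0,0], ![-1,0,1], ![-1,1,0], ![0,-1,0], ![0,-1,1], ![0,0,-1],
   ![0,0,0], ![0,0,1], ![0,1,-1], ![0,1,0], ![1,-1,0], ![1,0,-1], ![1,0,0], ![1,1,-1]]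

set_option maxRecDepth 4000 in
lemma step_mem : ∀ i : Fin 12, ∀ v ∈ V0, (Gz i).mulVec v ∈ V0 := by decide

lemma one_col_mem : ∀ j : Fin 3, (fun i => (1 : Matrix (Fin 3) (Fin 3) ℤ) i j) ∈ V0 := by
  decide

lemma prod_mulVec_mem (L : List (Fin 12)) : ∀ v ∈ V0, ((L.map Gz).prod).mulVec v ∈ V0 := by
  induction L with
  | nil => intro v hv; simpa [Matrix.one_mulVec] using hv
  | cons i L ih =>
    intro v hv
    have h : ((i :: L).map Gz).prod = Gz i * (L.map Gz).prod := by simp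
    rw [h, ← Matrix.mulVec_mulVec]
    exact step_mem i _ (ih v hv)

lemma pow_col_mem (L : List (Fin 12)) (k : ℕ) (j : Fin 3) :
    (fun i => (((L.map Gz).prod) ^ k) i j) ∈ V0 := by
  induction k with
  | zero => simpa using one_col_mem j
  | succ k ih =>
    have h1 : ((L.map Gz).prod) ^ (k+1) = (L.map Gz).prod * ((L.map Gz).prod) ^ k :=
      pow_succ' _ _
    have h2 : (fun i => (((L.map Gz).prod) ^ (k+1)) i j)
        = ((L.map Gz).prod).mulVec (fun i => (((L.map Gz).prod) ^ k) i j) := by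
      funext i
      simp [h1, Matrix.mul_apply, Matrix.mulVec, dotProduct]
    rw [h2]
    exact prod_mulVec_mem L _ ih

lemma good_finite :
    {M : Matrix (Fin 3) (Fin 3) ℤ | ∀ j, (fun i => M i j) ∈ V0}.Finite := by
  have hT : (Set.pi Set.univ (fun _ : Fin 3 => {v : Fin 3 → ℤ | v ∈ V0})).Finite :=
    Set.Finite.pi (fun _ => V0.finite_toSet)
  apply Set.Finite.subset (hT.image (fun c => Matrix.of fun i j => c j i))
  intro M hM
  exact ⟨fun j i => M i j, fun j _ => hM j, rfl⟩

lemma exists_pow_eq (L : List (Fin 12)) :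
    ∃ a b : ℕ, a < b ∧ ((L.map Gz).prod) ^ a = ((L.map Gz).prod) ^ b := by
  have hmaps : Set.MapsTo (fun k : ℕ => ((L.map Gz).prod) ^ k) Set.univ
      {M : Matrix (Fin 3) (Fin 3) ℤ | ∀ j, (fun i => M i j) ∈ V0} := by
    intro k _
    exact fun j => pow_col_mem L k j
  obtain ⟨a, -, b, -, hab, heq⟩ :=
    Set.infinite_univ.exists_ne_map_eq_of_mapsTo hmaps good_finite
  rcases hab.lt_or_gt with h | h
  · exact ⟨a, b, h, heq⟩
  · exact ⟨b, a, h, heq.symm⟩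

lemma G_eq_map (i : Fin 12) : G i = (Gz i).map (Int.cast : ℤ → ℂ) := by
  fin_cases i
  · show (!![0,0,-1; 0,1,0; 0,0,1] : Matrix (Fin 3) (Fin 3) ℂ) = (!![0,0,-1; 0,1,0; 0,0,1] : Matrix (Fin 3) (Fin 3) ℤ).map (Int.cast : ℤ → ℂ)
    ext j k; fin_cases j <;> fin_cases k <;> simp [Matrix.map_apply, Matrix.vecHead, Matrix.vecTail]
  · show (!![1,0,0; 1,1,1; -1,0,0] : Matrix (Fin 3) (Fin 3) ℂ) = (!![1,0,0; 1,1,1; -1,0,0] : Matrix (Fin 3) (Fin 3) ℤ).map (Int.cast : ℤ → ℂ)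
    ext j k; fin_cases j <;> fin_cases k <;> simp [Matrix.map_apply, Matrix.vecHead, Matrix.vecTail]
  · show (!![0,0,0; 0,1,0; 0,0,1] : Matrix (Fin 3) (Fin 3) ℂ) = (!![0,0,0; 0,1,0; 0,0,1] : Matrix (Fin 3) (Fin 3) ℤ).map (Int.cast : ℤ → ℂ)
    ext j k; fin_cases j <;> fin_cases k <;> simp [Matrix.map_apply, Matrix.vecHead, Matrix.vecTail]
  · show (!![0,0,0; 0,1,0; 1,0,1] : Matrix (Fin 3) (Fin 3) ℂ) = (!![0,0,0; 0,1,0; 1,0,1] : Matrix (Fin 3) (Fin 3) ℤ).map (Int.cast : ℤ → ℂ)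
    ext j k; fin_cases j <;> fin_cases k <;> simp [Matrix.map_apply, Matrix.vecHead, Matrix.vecTail]
  · show (!![1,0,0; 0,1,1; 0,0,0] : Matrix (Fin 3) (Fin 3) ℂ) = (!![1,0,0; 0,1,1; 0,0,0] : Matrix (Fin 3) (Fin 3) ℤ).map (Int.cast : ℤ → ℂ)
    ext j k; fin_cases j <;> fin_cases k <;> simp [Matrix.map_apply, Matrix.vecHead, Matrix.vecTail]
  · show (!![1,0,1; 0,1,0; 0,0,0] : Matrix (Fin 3) (Fin 3) ℂ) = (!![1,0,1; 0,1,0; 0,0,0] : Matrix (Fin 3) (Fin 3) ℤ).map (Int.cast : ℤ → ℂ)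
    ext j k; fin_cases j <;> fin_cases k <;> simp [Matrix.map_apply, Matrix.vecHead, Matrix.vecTail]
  · show (!![0,-1,-1; 0,1,0; 0,0,1] : Matrix (Fin 3) (Fin 3) ℂ) = (!![0,-1,-1; 0,1,0; 0,0,1] : Matrix (Fin 3) (Fin 3) ℤ).map (Int.cast : ℤ → ℂ)
    ext j k; fin_cases j <;> fin_cases k <;> simp [Matrix.map_apply, Matrix.vecHead, Matrix.vecTail]
  · show (!![1,0,0; -1,0,-1; 0,0,1] : Matrix (Fin 3) (Fin 3) ℂ) = (!![1,0,0; -1,0,-1; 0,0,1] : Matrix (Fin 3) (Fin 3) ℤ).map (Int.cast : ℤ → ℂ)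
    ext j k; fin_cases j <;> fin_cases k <;> simp [Matrix.map_apply, Matrix.vecHead, Matrix.vecTail]
  · show (!![1,0,0; 0,0,0; 0,1,1] : Matrix (Fin 3) (Fin 3) ℂ) = (!![1,0,0; 0,0,0; 0,1,1] : Matrix (Fin 3) (Fin 3) ℤ).map (Int.cast : ℤ → ℂ)
    ext j k; fin_cases j <;> fin_cases k <;> simp [Matrix.map_apply, Matrix.vecHead, Matrix.vecTail]
  · show (!![1,0,0; 0,0,0; 0,0,1] : Matrix (Fin 3) (Fin 3) ℂ) = (!![1,0,0; 0,0,0; 0,0,1] : Matrix (Fin 3) (Fin 3) ℤ).map (Int.cast : ℤ → ℂ)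
    ext j k; fin_cases j <;> fin_cases k <;> simp [Matrix.map_apply, Matrix.vecHead, Matrix.vecTail]
  · show (!![1,1,1; 0,1,0; 0,-1,0] : Matrix (Fin 3) (Fin 3) ℂ) = (!![1,1,1; 0,1,0; 0,-1,0] : Matrix (Fin 3) (Fin 3) ℤ).map (Int.cast : ℤ → ℂ)
    ext j k; fin_cases j <;> fin_cases k <;> simp [Matrix.map_apply, Matrix.vecHead, Matrix.vecTail]
  · show (!![1,0,0; 0,0,-1; 0,0,1] : Matrix (Fin 3) (Fin 3) ℂ) = (!![1,0,0; 0,0,-1; 0,0,1] : Matrix (Fin 3) (Fin 3) ℤ).map (Int.cast : ℤ → ℂ)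
    ext j k; fin_cases j <;> fin_cases k <;> simp [Matrix.map_apply, Matrix.vecHead, Matrix.vecTail]

lemma prod_eq_map (L : List (Fin 12)) :
    (L.map G).prod = ((L.map Gz).prod).map (Int.cast : ℤ → ℂ) := by
  induction L with
  | nil =>
    simp only [List.map_nil, List.prod_nil]
    ext i j
    simp [Matrix.map_apply, Matrix.one_apply, apply_ite (Int.cast : ℤ → ℂ)]
  | cons i L ih =>
    rw [List.map_cons, List.map_cons, List.prod_cons, List.prod_cons, ih, G_eq_map i]
    have h := Matrix.map_mul (L := Gz i) (M := (L.map Gz).prod) (f := Int.castRingHom ℂ)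
    simpa using h.symm

lemma real_pow_lemma {r : ℝ} (hr : 0 ≤ r) {a b : ℕ} (hab : a < b) (h : r ^ a = r ^ b) :
    r = 0 ∨ r = 1 := by
  rcases hr.eq_or_lt with h0 | h0
  · exact Or.inl h0.symm
  · right
    have hb : b = a + (b - a) := by omega
    have hpow : r ^ a * 1 = r ^ a * r ^ (b - a) := by
      rw [mul_one, ← pow_add, ← hb, h]
    have h1 : r ^ (b - a) = 1 := (mul_left_cancel₀ (pow_ne_zero a h0.ne') hpow).symm
    rcases lt_trichotomy r 1 with hlt | heq | hgt
    · exfalso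
      have : r ^ (b - a) < 1 := pow_lt_one₀ hr hlt (by omega)
      linarith
    · exact heq
    · exfalso
      have : 1 < r ^ (b - a) := one_lt_pow₀ hgt (by omega)
      linarith

lemma eigen_pow_eq {M : Matrix (Fin 3) (Fin 3) ℂ} {μ : ℂ}
    (h : M.charpoly.IsRoot μ) {a b : ℕ} (hab : M ^ a = M ^ b) : μ ^ a = μ ^ b := by
  have hdet : (μ • (1 : Matrix (Fin 3) (Fin 3) ℂ) - M).det = 0 := by
    have heval : M.charpoly.eval μ = (μ • (1 : Matrix (Fin 3) (Fin 3) ℂ) - M).det := by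
      rw [Matrix.charpoly, ← Polynomial.coe_evalRingHom, RingHom.map_det]
      congr 1
      ext i j
      rcases eq_or_ne i j with rfl | hij
      · simp [Matrix.charmatrix_apply_eq, Matrix.one_apply]
      · simp [Matrix.charmatrix_apply_ne _ _ _ hij, Matrix.one_apply_ne hij]
    rw [← heval]; exact h
  obtain ⟨v, hv0, hv⟩ := (Matrix.exists_mulVec_eq_zero_iff).mpr hdet
  have hMv : M.mulVec v = μ • v := by
    rw [Matrix.sub_mulVec, Matrix.smul_mulVec, Matrix.one_mulVec, sub_eq_zero] at hv
    exact hv.symm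
  have hpow : ∀ k : ℕ, (M ^ k).mulVec v = μ ^ k • v := by
    intro k
    induction k with
    | zero => simp [Matrix.one_mulVec]
    | succ k ih =>
      rw [pow_succ', ← Matrix.mulVec_mulVec, ih, Matrix.mulVec_smul, hMv,
        smul_smul, ← pow_succ]
  have hab' : μ ^ a • v = μ ^ b • v := by rw [← hpow a, ← hpow b, hab]
  obtain ⟨i, hi⟩ := Function.ne_iff.mp hv0
  have hcoord : μ ^ a * v i = μ ^ b * v i := congrFun hab' i
  exact mul_right_cancel₀ (by simpa using hi) hcoord

theorem eigenvalues_of_G_products_in_unit_disc (L : List (Fin 12)) :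
    (∀ μ : ℂ, ((L.map G).prod.charpoly.IsRoot μ) → ‖μ‖ ≤ 1) ∧
    ((∀ μ : ℂ, ((L.map G).prod.charpoly.IsRoot μ) → μ = 0) ∨
      (∃ μ : ℂ, ((L.map G).prod.charpoly.IsRoot μ) ∧ ‖μ‖ = 1)) := by
  obtain ⟨a, b, hab, hpow⟩ := exists_pow_eq L
  have hmapform : (L.map G).prod = (Int.castRingHom ℂ).mapMatrix ((L.map Gz).prod) := by
    rw [prod_eq_map]
    rfl
  have hpowC : ((L.map G).prod) ^ a = ((L.map G).prod) ^ b := by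
    rw [hmapform, ← map_pow, ← map_pow, hpow]
  have key : ∀ μ : ℂ, ((L.map G).prod.charpoly.IsRoot μ) →
      ‖μ‖ = 0 ∨ ‖μ‖ = 1 := by
    intro μ hμ
    have hμpow : μ ^ a = μ ^ b := eigen_pow_eq hμ hpowC
    have habs : (‖μ‖) ^ a = (‖μ‖) ^ b := by
      rw [← norm_pow, ← norm_pow, hμpow]
    exact real_pow_lemma (norm_nonneg μ) hab habs
  constructor
  · intro μ hμ
    rcases key μ hμ with h | h <;> simp [h]
  · by_cases hall : ∀ μ : ℂ, ((L.map G).prod.charpoly.IsRoot μ) → μ = 0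
    · exact Or.inl hall
    · right
      push_neg at hall
      obtain ⟨μ, hμ, hμ0⟩ := hall
      refine ⟨μ, hμ, ?_⟩
      rcases key μ hμ with h | h
      · exact absurd (norm_eq_zero.mp h) hμ0
      · exact h
end

section
/- If a finite product of matrices from the family {B₁,...,B₁₂} (strong arbitrage matrices) is conjugated by Q to block form [[I₃,0],[F,G]] where G is the corresponding product of G-matrices, then every eigenvalue of the product of B-matrices equals either 0 or 1, or has absolute value at most 1 with all eigenvalues on the unit circle equal to 1; in particular, the spectral radius of any finite product of matrices B_n is exactly 1. -/
open Matrix Polynomial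

/-- Integer versions of the matrices `B`. -/
abbrev Bz : Fin 12 → Matrix (Fin 6) (Fin 6) ℤ :=
  ![!![0,0,0,0,0,0; -1,1,0,0,0,0; 0,0,1,0,0,0; 1,0,0,1,0,0; 0,0,0,0,1,0; 0,0,0,0,0,1],
    !![0,0,0,0,0,0; 0,1,0,0,0,0; 0,0,1,0,0,0; 0,0,0,1,0,0; -1,0,0,0,1,0; 1,0,0,0,0,1],
    !![1,0,0,1,0,0; 0,1,0,1,0,0; 0,0,1,0,0,0; 0,0,0,0,0,0; 0,0,0,0,1,0; 0,0,0,0,0,1],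
    !![1,0,0,0,0,0; 0,1,0,0,0,0; 0,0,1,-1,0,0; 0,0,0,0,0,0; 0,0,0,0,1,0; 0,0,0,1,0,1],
    !![1,0,0,0,0,1; 0,1,0,0,0,0; 0,0,1,0,0,0; 0,0,0,1,0,0; 0,0,0,0,1,1; 0,0,0,0,0,0],
    !![1,0,0,0,0,0; 0,1,0,0,0,0; 0,0,1,0,0,1; 0,0,0,1,0,1; 0,0,0,0,1,0; 0,0,0,0,0,0],
    !![1,-1,0,0,0,0; 0,0,0,0,0,0; 0,0,1,0,0,0; 0,1,0,1,0,0; 0,0,0,0,1,0; 0,0,0,0,0,1],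
    !![1,0,0,0,0,0; 0,0,0,0,0,0; 0,-1,1,0,0,0; 0,0,0,1,0,0; 0,1,0,0,1,0; 0,0,0,0,0,1],
    !![1,0,0,0,-1,0; 0,1,0,0,0,0; 0,0,1,0,0,0; 0,0,0,1,0,0; 0,0,0,0,0,0; 0,0,0,0,1,1],
    !![1,0,0,0,0,0; 0,1,0,0,1,0; 0,0,1,0,1,0; 0,0,0,1,0,0; 0,0,0,0,0,0; 0,0,0,0,0,1],
    !![1,0,0,0,0,0; 0,1,0,0,0,0; 0,0,0,0,0,0; 0,0,-1,1,0,0; 0,0,0,0,1,0; 0,0,1,0,0,1],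
    !![1,0,0,0,0,0; 0,1,-1,0,0,0; 0,0,0,0,0,0; 0,0,0,1,0,0; 0,0,1,0,1,0; 0,0,0,0,0,1]]

/-- The change-of-basis matrix `Q`. -/
abbrev Qz : Matrix (Fin 6) (Fin 6) ℤ :=
  !![1,0,0,1,0,0; 0,1,0,0,1,0; 0,0,1,0,0,1; 0,0,0,0,-1,1; 0,0,0,1,-1,0; 0,0,0,-1,1,-1]

/-- The inverse of `Q`. -/
abbrev Qiz : Matrix (Fin 6) (Fin 6) ℤ :=
  !![1,0,0,1,0,1; 0,1,0,1,1,1; 0,0,1,0,1,1; 0,0,0,-1,0,-1; 0,0,0,-1,-1,-1; 0,0,0,0,-1,-1]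

/-- The 13 possible rows of products of the matrices `G_n`. -/
abbrev Rv : Fin 13 → (Fin 3 → ℤ) :=
  ![![-1,0,0], ![-1,1,-1], ![-1,1,0], ![0,-1,0], ![0,-1,1], ![0,0,-1], ![0,0,0],
    ![0,0,1], ![0,1,-1], ![0,1,0], ![1,-1,0], ![1,-1,1], ![1,0,0]]

/-- Bottom-right `3×3` block. -/
abbrev br (P : Matrix (Fin 6) (Fin 6) ℤ) : Matrix (Fin 3) (Fin 3) ℤ :=
  fun i j => P (Fin.natAdd 3 i) (Fin.natAdd 3 j)

/-- The invariant: conjugated products have first three rows equal to those of the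
identity, and the bottom-right block maps the rows `Rv` into the rows `Rv`. -/
abbrev Pred (P : Matrix (Fin 6) (Fin 6) ℤ) : Prop :=
  (∀ i : Fin 6, (i : ℕ) < 3 → ∀ j : Fin 6, P i j = if i = j then 1 else 0) ∧
  (∀ k : Fin 13, ∃ k', Matrix.vecMul (Rv k) (br P) = Rv k')

lemma pred_one : Pred 1 := ⟨fun i _ j => Matrix.one_apply, by decide⟩

lemma pred_gen (n : Fin 12) : Pred (Qiz * Bz n * Qz) := by fin_cases n <;> exact ⟨by decide, by decide⟩

lemma br_mul {P P' : Matrix (Fin 6) (Fin 6) ℤ} (hP' : Pred P') :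
    br (P * P') = br P * br P' := by
  ext i j
  show (P * P') (Fin.natAdd 3 i) (Fin.natAdd 3 j) = _
  rw [Matrix.mul_apply, Fin.sum_univ_six]
  have z : ∀ k : Fin 6, (k : ℕ) < 3 → P' k (Fin.natAdd 3 j) = 0 := by
    intro k hk
    rw [hP'.1 k hk, if_neg]
    refine Fin.ne_of_val_ne ?_
    simp only [Fin.coe_natAdd]
    omega
  rw [z 0 (by norm_num), z 1 (by norm_num), z 2 (by norm_num)]
  simp only [mul_zero, zero_add, zero_add]
  rw [Matrix.mul_apply, Fin.sum_univ_three]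
  rfl

lemma pred_mul {P P' : Matrix (Fin 6) (Fin 6) ℤ} (hP : Pred P) (hP' : Pred P') :
    Pred (P * P') := by
  constructor
  · intro i hi j
    rw [Matrix.mul_apply]
    have : ∀ k : Fin 6, P i k * P' k j
        = if i = k then P' k j else 0 := by
      intro k; rw [hP.1 i hi k]; split <;> simp
    rw [Finset.sum_congr rfl (fun k _ => this k),
      Finset.sum_ite_eq (Finset.univ) _ (fun k => P' k j), if_pos (Finset.mem_univ _)]
    exact hP'.1 i hi j
  · intro k
    obtain ⟨k', hk'⟩ := hP.2 k
    obtain ⟨k'', hk''⟩ := hP'.2 k'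
    refine ⟨k'', ?_⟩
    rw [br_mul hP', ← Matrix.vecMul_vecMul, hk', hk'']
lemma hQQi : Qz * Qiz = 1 := by decide
lemma hQiQ : Qiz * Qz = 1 := by decide

lemma pred_prod (L : List (Fin 12)) : Pred (Qiz * (L.map Bz).prod * Qz) := by
  induction L with
  | nil => rw [List.map_nil, List.prod_nil, Matrix.mul_one, hQiQ]; exact pred_one
  | cons n L ih =>
      have key : Qiz * ((n :: L).map Bz).prod * Qz
          = (Qiz * Bz n * Qz) * (Qiz * (L.map Bz).prod * Qz) := by
        simp only [List.map_cons, List.prod_cons, Matrix.mul_assoc]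
        rw [show Qz * (Qiz * ((L.map Bz).prod * Qz)) = (Qz * Qiz) * ((L.map Bz).prod * Qz) from
          (Matrix.mul_assoc _ _ _).symm, hQQi, Matrix.one_mul]
      rw [key]
      exact pred_mul (pred_gen n) ih

/-- The twelve `6×6` matrices `B_n` of the paper (acting on row vectors on the right),
in the log-coordinates `v = (log r_FA, log r_AR, log r_RM, log r_FR, log r_AM, log r_FM)`. -/
def B : Fin 12 → Matrix (Fin 6) (Fin 6) ℂ :=
  ![!![0,0,0,0,0,0; -1,1,0,0,0,0; 0,0,1,0,0,0; 1,0,0,1,0,0; 0,0,0,0,1,0; 0,0,0,0,0,1],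
    !![0,0,0,0,0,0; 0,1,0,0,0,0; 0,0,1,0,0,0; 0,0,0,1,0,0; -1,0,0,0,1,0; 1,0,0,0,0,1],
    !![1,0,0,1,0,0; 0,1,0,1,0,0; 0,0,1,0,0,0; 0,0,0,0,0,0; 0,0,0,0,1,0; 0,0,0,0,0,1],
    !![1,0,0,0,0,0; 0,1,0,0,0,0; 0,0,1,-1,0,0; 0,0,0,0,0,0; 0,0,0,0,1,0; 0,0,0,1,0,1],
    !![1,0,0,0,0,1; 0,1,0,0,0,0; 0,0,1,0,0,0; 0,0,0,1,0,0; 0,0,0,0,1,1; 0,0,0,0,0,0],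
    !![1,0,0,0,0,0; 0,1,0,0,0,0; 0,0,1,0,0,1; 0,0,0,1,0,1; 0,0,0,0,1,0; 0,0,0,0,0,0],
    !![1,-1,0,0,0,0; 0,0,0,0,0,0; 0,0,1,0,0,0; 0,1,0,1,0,0; 0,0,0,0,1,0; 0,0,0,0,0,1],
    !![1,0,0,0,0,0; 0,0,0,0,0,0; 0,-1,1,0,0,0; 0,0,0,1,0,0; 0,1,0,0,1,0; 0,0,0,0,0,1],
    !![1,0,0,0,-1,0; 0,1,0,0,0,0; 0,0,1,0,0,0; 0,0,0,1,0,0; 0,0,0,0,0,0; 0,0,0,0,1,1],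
    !![1,0,0,0,0,0; 0,1,0,0,1,0; 0,0,1,0,1,0; 0,0,0,1,0,0; 0,0,0,0,0,0; 0,0,0,0,0,1],
    !![1,0,0,0,0,0; 0,1,0,0,0,0; 0,0,0,0,0,0; 0,0,-1,1,0,0; 0,0,0,0,1,0; 0,0,1,0,0,1],
    !![1,0,0,0,0,0; 0,1,-1,0,0,0; 0,0,0,0,0,0; 0,0,0,1,0,0; 0,0,1,0,1,0; 0,0,0,0,0,1]]

set_option maxHeartbeats 2000000 in
lemma hB (n : Fin 12) : B n = (Bz n).map (Int.cast : ℤ → ℂ) := by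
  fin_cases n <;>
    · ext i j
      fin_cases i <;> fin_cases j <;>
        norm_num [B, Bz, Matrix.map_apply, Matrix.cons_val_zero, Matrix.cons_val_succ]

lemma czmul {n : ℕ} (M N : Matrix (Fin n) (Fin n) ℤ) :
    (M * N).map (Int.cast : ℤ → ℂ) = M.map Int.cast * N.map Int.cast := by
  ext i j
  simp [Matrix.mul_apply, Matrix.map_apply]

lemma czone {n : ℕ} : ((1 : Matrix (Fin n) (Fin n) ℤ)).map (Int.cast : ℤ → ℂ) = 1 :=
  Matrix.map_one _ (by simp) (by simp)

lemma prod_cast (L : List (Fin 12)) :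
    (L.map B).prod = ((L.map Bz).prod).map (Int.cast : ℤ → ℂ) := by
  induction L with
  | nil => simp [czone]
  | cons n L ih => simp [List.map_cons, List.prod_cons, ih, hB n, czmul]

lemma charpoly_conj {n : ℕ} (M P Pi : Matrix (Fin n) (Fin n) ℂ) (h1 : Pi * P = 1) :
    (Pi * M * P).charpoly = M.charpoly := by
  have hm : ∀ A : Matrix (Fin n) (Fin n) ℂ,
      charmatrix A = (X : ℂ[X]) • (1 : Matrix (Fin n) (Fin n) ℂ[X]) - A.map C := by
    intro A; ext i j
    by_cases h : i = j <;>
      simp [charmatrix_apply, Matrix.one_apply, Matrix.diagonal_apply, h]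
  have hPi : Pi.map C * P.map C = 1 := by
    rw [← Matrix.map_mul, h1, Matrix.map_one] <;> simp
  have key : charmatrix (Pi * M * P) = Pi.map C * charmatrix M * P.map C := by
    rw [hm, hm, Matrix.map_mul, Matrix.map_mul, mul_sub, sub_mul]
    congr 1
    rw [Matrix.mul_smul, Matrix.smul_mul, Matrix.mul_one, hPi]
  rw [Matrix.charpoly, key, det_mul, det_mul, Matrix.charpoly]
  have : (Pi.map C).det * (P.map C).det = 1 := by rw [← det_mul, hPi, det_one]
  calc (Pi.map C).det * (charmatrix M).det * (P.map C).det
      = ((Pi.map C).det * (P.map C).det) * (charmatrix M).det := by ring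
    _ = (charmatrix M).det := by rw [this, one_mul]

lemma eval_charpoly' {n : ℕ} (A : Matrix (Fin n) (Fin n) ℂ) (μ : ℂ) :
    A.charpoly.eval μ = (μ • (1 : Matrix (Fin n) (Fin n) ℂ) - A).det := by
  rw [Matrix.charpoly, ← Polynomial.coe_evalRingHom, RingHom.map_det]
  congr 1
  ext i j
  by_cases h : i = j <;>
    simp [charmatrix_apply, Matrix.diagonal_apply, Matrix.one_apply, h]

lemma blocks {P : Matrix (Fin 6) (Fin 6) ℤ} (hP : Pred P) :
    Matrix.reindex finSumFinEquiv.symm finSumFinEquiv.symm (P.map (Int.cast : ℤ → ℂ)) =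
      Matrix.fromBlocks 1 0 (fun i j => ((P (Fin.natAdd 3 i) (Fin.castAdd 3 j) : ℤ) : ℂ))
        ((br P).map (Int.cast : ℤ → ℂ)) := by
  ext i j
  rcases i with i | i <;> rcases j with j | j <;>
    simp only [Matrix.reindex_apply, Equiv.symm_symm, Matrix.submatrix_apply,
      finSumFinEquiv_apply_left, finSumFinEquiv_apply_right, Matrix.map_apply,
      Matrix.fromBlocks, Matrix.of_apply, Sum.elim_inl, Sum.elim_inr]
  · rw [hP.1 (Fin.castAdd 3 i) (by simp) (Fin.castAdd 3 j)]
    by_cases h : i = j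
    · simp [h, Matrix.one_apply]
    · have hne : (Fin.castAdd 3 i) ≠ (Fin.castAdd 3 j) := by
        simpa [Fin.ext_iff] using fun hh => h (Fin.ext hh)
      have hne' : i ≠ j := h
      simp [Matrix.one_apply, hne, hne']
  · rw [Matrix.zero_apply, hP.1 (Fin.castAdd 3 i) (by simp) (Fin.natAdd 3 j), if_neg]
    · simp
    · refine Fin.ne_of_val_ne ?_
      simp only [Fin.coe_castAdd, Fin.coe_natAdd]
      omega

lemma charpoly_of_pred {P : Matrix (Fin 6) (Fin 6) ℤ} (hP : Pred P) :
    (P.map (Int.cast : ℤ → ℂ)).charpoly =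
      (1 : Matrix (Fin 3) (Fin 3) ℂ).charpoly * ((br P).map (Int.cast : ℤ → ℂ)).charpoly := by
  have h := Matrix.charpoly_reindex (R := ℂ) (finSumFinEquiv (m := 3) (n := 3)).symm
    (P.map (Int.cast : ℤ → ℂ))
  rw [blocks hP] at h
  exact h.symm.trans (Matrix.charpoly_fromBlocks_zero₁₂ _ _ _)

/-- Every finite product of the strong-arbitrage matrices `B_n` has spectral radius
exactly `1`: all its eigenvalues lie in the closed unit disc and `1` is an eigenvalue. -/
theorem spectral_radius_of_B_products_is_one (L : List (Fin 12)) :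
    (∀ μ : ℂ, ((L.map B).prod.charpoly.IsRoot μ) → ‖μ‖ ≤ 1) ∧
    ((L.map B).prod.charpoly.IsRoot 1) := by
  have hP : Pred (Qiz * (L.map Bz).prod * Qz) := pred_prod L
  set P6 := Qiz * (L.map Bz).prod * Qz with hP6
  have hcz : (L.map B).prod = ((L.map Bz).prod).map (Int.cast : ℤ → ℂ) := prod_cast L
  have hQiQ' : (Qiz.map (Int.cast : ℤ → ℂ)) * (Qz.map Int.cast) = 1 := by
    rw [← czmul, hQiQ, czone]
  have hMP6 : P6.map (Int.cast : ℤ → ℂ)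
      = (Qiz.map Int.cast) * (((L.map Bz).prod).map Int.cast) * (Qz.map Int.cast) := by
    rw [hP6, czmul, czmul]
  have hchar : ((L.map B).prod).charpoly
      = (1 : Matrix (Fin 3) (Fin 3) ℂ).charpoly
        * ((br P6).map (Int.cast : ℤ → ℂ)).charpoly := by
    rw [hcz, ← charpoly_conj (((L.map Bz).prod).map Int.cast) (Qz.map Int.cast)
      (Qiz.map Int.cast) hQiQ', ← hMP6, charpoly_of_pred hP]
  have hone : ∀ μ : ℂ, (1 : Matrix (Fin 3) (Fin 3) ℂ).charpoly.eval μ = (μ - 1) ^ 3 := by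
    intro μ
    rw [eval_charpoly']
    have h1 : μ • (1 : Matrix (Fin 3) (Fin 3) ℂ) - 1 = (μ - 1) • 1 := by
      rw [sub_smul, one_smul]
    rw [h1, det_smul, det_one, mul_one]
    simp
  constructor
  · intro μ hroot
    rw [Polynomial.IsRoot, hchar, Polynomial.eval_mul] at hroot
    rcases mul_eq_zero.mp hroot with h | h
    · rw [hone] at h
      have hμ : μ = 1 := sub_eq_zero.mp (pow_eq_zero_iff (by norm_num) |>.mp h)
      rw [hμ]; simp
    · rw [eval_charpoly'] at h
      set A3 := (br P6).map (Int.cast : ℤ → ℂ) with hA3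
      obtain ⟨v, hv0, hv⟩ := Matrix.exists_mulVec_eq_zero_iff.mpr h
      have heig : A3 *ᵥ v = μ • v := by
        rw [Matrix.sub_mulVec, Matrix.smul_mulVec, Matrix.one_mulVec] at hv
        exact (sub_eq_zero.mp hv).symm
      set f : Fin 13 → ℝ :=
        fun k => ‖dotProduct (fun i => ((Rv k i : ℤ) : ℂ)) v‖ with hf
      obtain ⟨k0, -, hk0⟩ := Finset.exists_max_image Finset.univ f ⟨0, Finset.mem_univ 0⟩
      have hk0' : ∀ k, f k ≤ f k0 := fun k => hk0 k (Finset.mem_univ k)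
      obtain ⟨j, hj⟩ := Function.ne_iff.mp hv0
      have hpos : 0 < f k0 := by
        have h12 : Rv 12 = ![(1:ℤ),0,0] := by decide
        have h9 : Rv 9 = ![(0:ℤ),1,0] := by decide
        have h7 : Rv 7 = ![(0:ℤ),0,1] := by decide
        have hle : ‖v j‖ ≤ f k0 := by
          fin_cases j
          · refine le_trans (le_of_eq ?_) (hk0' 12)
            simp only [hf, h12]
            simp [dotProduct, Fin.sum_univ_three]
          · refine le_trans (le_of_eq ?_) (hk0' 9)
            simp only [hf, h9]
            simp [dotProduct, Fin.sum_univ_three]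
          · refine le_trans (le_of_eq ?_) (hk0' 7)
            simp only [hf, h7]
            simp [dotProduct, Fin.sum_univ_three]
        exact lt_of_lt_of_le (by simpa using (norm_pos_iff.mpr hj)) hle
      obtain ⟨k', hk'⟩ := hP.2 k0
      have castvm : Matrix.vecMul (fun i => ((Rv k0 i : ℤ) : ℂ)) A3
          = (fun i => ((Matrix.vecMul (Rv k0) (br P6) i : ℤ) : ℂ)) := by
        ext i
        simp [Matrix.vecMul, dotProduct, Fin.sum_univ_three, hA3, Matrix.map_apply]
      have key : ‖μ‖ * f k0 ≤ f k0 := by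
        have h1 : dotProduct (fun i => ((Rv k0 i : ℤ) : ℂ)) (A3 *ᵥ v)
            = dotProduct (fun i => ((Rv k' i : ℤ) : ℂ)) v := by
          rw [Matrix.dotProduct_mulVec, castvm]
          simp only [hk']
        have h2 : dotProduct (fun i => ((Rv k0 i : ℤ) : ℂ)) (A3 *ᵥ v)
            = μ * dotProduct (fun i => ((Rv k0 i : ℤ) : ℂ)) v := by
          rw [heig, dotProduct_smul, smul_eq_mul]
        calc ‖μ‖ * f k0
            = ‖μ * dotProduct (fun i => ((Rv k0 i : ℤ) : ℂ)) v‖ := by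
              simp only [hf]
              rw [← norm_mul]
          _ = ‖dotProduct (fun i => ((Rv k' i : ℤ) : ℂ)) v‖ := by
              rw [← h2, h1]
          _ = f k' := by simp only [hf]
          _ ≤ f k0 := hk0' k'
      exact (mul_le_iff_le_one_left hpos).mp key
  · rw [Polynomial.IsRoot, hchar, Polynomial.eval_mul, hone]
    norm_num
end
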